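/- For every C > 0 there exists C′ > 0, depending only on C, such that the following holds. Let 0 < ε ≤ 2⁻⁹ and let (a_q)_{q≥5} be a sequence of real numbers satisfying: |a_q| ≤ C·q⁸·ε² for every integer q with 5 ≤ q ≤ ε^{−1/9}, and |a_q| ≤ C·ε/q for every integer q ≥ 5. Then Σ_{q=5}^∞ a_q² ≤ C′·ε^{19/9}. -/

import Mathlib

open Finset

/-- Core summation estimate in the proof of Lemma 8.1: if the coefficients `a_q`
satisfy `|a_q| ≤ C q⁸ ε²` up to the cutoff `q ≤ ε^{-1/9}` and `|a_q| ≤ C ε / q`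
for all `q ≥ 5`, then `∑_{q≥5} a_q² ≤ C' ε^{19/9}`. -/
theorem stmt9 (C : ℝ) (hC : 0 < C) :
    ∃ C' : ℝ, 0 < C' ∧
      ∀ ε : ℝ, 0 < ε → ε ≤ (2 : ℝ) ^ (-9 : ℤ) →
        ∀ a : ℕ → ℝ,
          (∀ q : ℕ, 5 ≤ q → (q : ℝ) ≤ ε ^ (-(1 / 9) : ℝ) →
            |a q| ≤ C * (q : ℝ) ^ 8 * ε ^ 2) →
          (∀ q : ℕ, 5 ≤ q → |a q| ≤ C * ε / q) →
          Summable (fun q : ℕ => (a (q + 5)) ^ 2) ∧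
          ∑' q : ℕ, (a (q + 5)) ^ 2 ≤ C' * ε ^ ((19 : ℝ) / 9) := by
  refine ⟨6 ^ 17 * C ^ 2 + C ^ 2, by positivity, ?_⟩
  intro ε hε hε2 a h1 h2
  set E : ℝ := ε ^ (-(1 / 9) : ℝ) with hEdef
  have hEpos : 0 < E := Real.rpow_pos_of_pos hε _
  have hε1 : ε ≤ 1 := hε2.trans (by norm_num)
  have hE1 : 1 ≤ E :=
    Real.one_le_rpow_of_pos_of_le_one_of_nonpos hε hε1 (by norm_num)
  have hE9 : E ^ (9 : ℕ) = ε⁻¹ := by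
    rw [hEdef, ← Real.rpow_natCast (ε ^ (-(1/9) : ℝ)) 9, ← Real.rpow_mul hε.le]
    norm_num [Real.rpow_neg_one]
  -- Lemma B: for all q ≥ 5, a q ^ 2 ≤ C^2 * ε^2 / q^2
  have LemB : ∀ q : ℕ, 5 ≤ q → a q ^ 2 ≤ C ^ 2 * ε ^ 2 / (q : ℝ) ^ 2 := by
    intro q hq
    have hqpos : (0:ℝ) < q := by exact_mod_cast (by omega : 0 < q)
    have hb := h2 q hq
    have hbnn : 0 ≤ C * ε / q := by positivity
    calc a q ^ 2 = |a q| ^ 2 := (sq_abs _).symm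
      _ ≤ (C * ε / q) ^ 2 := pow_le_pow_left₀ (abs_nonneg _) hb 2
      _ = C ^ 2 * ε ^ 2 / (q : ℝ) ^ 2 := by ring
  -- Lemma A: for all q ≥ 5, a q ^ 2 ≤ C^2 * ε^4 * q^16
  have LemA : ∀ q : ℕ, 5 ≤ q → a q ^ 2 ≤ C ^ 2 * ε ^ 4 * (q : ℝ) ^ 16 := by
    intro q hq
    have hqpos : (0:ℝ) < q := by exact_mod_cast (by omega : 0 < q)
    rcases le_or_gt (q : ℝ) E with hle | hgt
    · have hb := h1 q hq hle
      calc a q ^ 2 = |a q| ^ 2 := (sq_abs _).symm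
        _ ≤ (C * (q:ℝ) ^ 8 * ε ^ 2) ^ 2 := pow_le_pow_left₀ (abs_nonneg _) hb 2
        _ = C ^ 2 * ε ^ 4 * (q : ℝ) ^ 16 := by ring
    · have hq9 : ε⁻¹ ≤ (q : ℝ) ^ 9 := by
        rw [← hE9]; exact pow_le_pow_left₀ hEpos.le hgt.le 9
      have h1q : 1 ≤ ε * (q : ℝ) ^ 9 := by
        calc (1:ℝ) = ε * ε⁻¹ := (mul_inv_cancel₀ hε.ne').symm
          _ ≤ ε * (q : ℝ) ^ 9 := mul_le_mul_of_nonneg_left hq9 hε.le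
      have key : (1:ℝ) / (q:ℝ) ^ 2 ≤ ε ^ 2 * (q:ℝ) ^ 16 := by
        rw [div_le_iff₀ (by positivity)]
        nlinarith [sq_nonneg (ε * (q:ℝ)^9), pow_pos hqpos 9, pow_pos hqpos 2]
      calc a q ^ 2 ≤ C ^ 2 * ε ^ 2 / (q : ℝ) ^ 2 := LemB q hq
        _ = C ^ 2 * ε ^ 2 * (1 / (q:ℝ)^2) := by ring
        _ ≤ C ^ 2 * ε ^ 2 * (ε ^ 2 * (q:ℝ)^16) := by
            apply mul_le_mul_of_nonneg_left key (by positivity)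
        _ = C ^ 2 * ε ^ 4 * (q : ℝ) ^ 16 := by ring
  -- summability
  have hsum2 : Summable (fun q : ℕ => C ^ 2 * ε ^ 2 / ((q + 5 : ℕ) : ℝ) ^ 2) := by
    have : Summable (fun q : ℕ => ((q : ℝ) ^ 2)⁻¹) := by
      simpa using Real.summable_one_div_nat_pow.2 (show 1 < 2 by norm_num)
    have := ((summable_nat_add_iff 5).2 this).mul_left (C ^ 2 * ε ^ 2)
    simpa [div_eq_mul_inv] using this
  have hs : Summable (fun q : ℕ => a (q + 5) ^ 2) := by
    refine Summable.of_nonneg_of_le (fun q => sq_nonneg _) (fun q => ?_) hsum2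
    exact LemB (q + 5) (by omega)
  refine ⟨hs, ?_⟩
  set N : ℕ := ⌈E⌉₊ with hNdef
  have hNE : E ≤ (N : ℝ) := Nat.le_ceil E
  have hNle : (N : ℝ) ≤ E + 1 := (Nat.ceil_lt_add_one hEpos.le).le
  have hNpos : 0 < N := Nat.ceil_pos.2 hEpos
  -- split
  rw [← Summable.sum_add_tsum_nat_add N hs]
  -- head bound
  have head : ∑ i ∈ range N, a (i + 5) ^ 2 ≤ 6 ^ 17 * C ^ 2 * ε ^ ((19:ℝ)/9) := by
    have hterm : ∀ i ∈ range N, a (i + 5) ^ 2 ≤ C ^ 2 * ε ^ 4 * ((N : ℝ) + 4) ^ 16 := by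
      intro i hi
      rw [mem_range] at hi
      refine (LemA (i + 5) (by omega)).trans ?_
      have : ((i + 5 : ℕ) : ℝ) ≤ (N : ℝ) + 4 := by
        have : ((i + 1 : ℕ) : ℝ) ≤ ((N : ℕ) : ℝ) := Nat.cast_le.mpr (by omega)
        push_cast at this ⊢; linarith
      exact mul_le_mul_of_nonneg_left (pow_le_pow_left₀ (by positivity) this 16) (by positivity)
    calc ∑ i ∈ range N, a (i + 5) ^ 2
        ≤ ∑ _i ∈ range N, C ^ 2 * ε ^ 4 * ((N : ℝ) + 4) ^ 16 := Finset.sum_le_sum hterm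
      _ = (N : ℝ) * (C ^ 2 * ε ^ 4 * ((N : ℝ) + 4) ^ 16) := by
          rw [Finset.sum_const, card_range, nsmul_eq_mul]
      _ ≤ ((N : ℝ) + 4) * (C ^ 2 * ε ^ 4 * ((N : ℝ) + 4) ^ 16) :=
          mul_le_mul_of_nonneg_right (by linarith) (by positivity)
      _ = C ^ 2 * ε ^ 4 * ((N : ℝ) + 4) ^ 17 := by ring
      _ ≤ C ^ 2 * ε ^ 4 * (6 * E) ^ 17 := by
          have h6 : (N : ℝ) + 4 ≤ 6 * E := by linarith
          exact mul_le_mul_of_nonneg_left (pow_le_pow_left₀ (by positivity) h6 17) (by positivity)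
      _ = 6 ^ 17 * C ^ 2 * (ε ^ 4 * E ^ 17) := by ring
      _ = 6 ^ 17 * C ^ 2 * ε ^ ((19:ℝ)/9) := by
          congr 1
          rw [hEdef, ← Real.rpow_natCast (ε ^ (-(1/9) : ℝ)) 17, ← Real.rpow_mul hε.le,
            ← Real.rpow_natCast ε 4, ← Real.rpow_add hε]
          norm_num
  -- tail bound
  have invsq : ∑' i : ℕ, (((i + (N + 5) : ℕ) : ℝ) ^ 2)⁻¹ ≤ ((N : ℝ) + 4)⁻¹ := by
    apply Real.tsum_le_of_sum_range_le (fun n => by positivity)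
    intro n
    rcases n with _ | m
    · simp; positivity
    have key : ∑ i ∈ range (m + 1), (((i + (N + 5) : ℕ) : ℝ) ^ 2)⁻¹
        = ∑ i ∈ Ioc (N + 4) (N + 4 + (m + 1)), ((i : ℝ) ^ 2)⁻¹ := by
      rw [show N + 4 + (m + 1) = (N + 4 + m) + 1 from by omega, ← Finset.Ico_add_one_add_one_eq_Ioc,
        Finset.sum_Ico_eq_sum_range, show (N + 4 + m + 1 + 1) - (N + 4 + 1) = m + 1 from by omega]
      exact Finset.sum_congr rfl fun i _ => by congr 1; push_cast; ring
    rw [key]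
    refine (sum_Ioc_inv_sq_le_sub (by omega) (by omega)).trans ?_
    have h0 : (0:ℝ) ≤ ((N + 4 + (m + 1) : ℕ) : ℝ)⁻¹ := by positivity
    push_cast
    push_cast at h0
    linarith
  have tail : ∑' i : ℕ, a (i + N + 5) ^ 2 ≤ C ^ 2 * ε ^ ((19:ℝ)/9) := by
    have hsumtail : Summable (fun i : ℕ => C ^ 2 * ε ^ 2 * (((i + (N + 5) : ℕ) : ℝ) ^ 2)⁻¹) := by
      have : Summable (fun q : ℕ => ((q : ℝ) ^ 2)⁻¹) := by
        simpa using Real.summable_one_div_nat_pow.2 (show 1 < 2 by norm_num)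
      exact (((summable_nat_add_iff (N + 5)).2 this).mul_left _)
    have hstail : Summable (fun i : ℕ => a (i + N + 5) ^ 2) := by
      have := (summable_nat_add_iff N).2 hs
      simpa [add_assoc] using this
    have step1 : ∑' i : ℕ, a (i + N + 5) ^ 2
        ≤ ∑' i : ℕ, C ^ 2 * ε ^ 2 * (((i + (N + 5) : ℕ) : ℝ) ^ 2)⁻¹ := by
      refine Summable.tsum_le_tsum (fun i => ?_) hstail hsumtail
      have := LemB (i + N + 5) (by omega)
      calc a (i + N + 5) ^ 2 ≤ C ^ 2 * ε ^ 2 / ((i + N + 5 : ℕ) : ℝ) ^ 2 := this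
        _ = C ^ 2 * ε ^ 2 * (((i + (N + 5) : ℕ) : ℝ) ^ 2)⁻¹ := by
            rw [div_eq_mul_inv, Nat.add_assoc]
    refine step1.trans ?_
    rw [tsum_mul_left]
    have hinv : ((N : ℝ) + 4)⁻¹ ≤ ε ^ ((1:ℝ)/9) := by
      have hEinv : E⁻¹ = ε ^ ((1:ℝ)/9) := by
        rw [hEdef, ← Real.rpow_neg hε.le]; norm_num
      rw [← hEinv]
      apply inv_anti₀ hEpos
      linarith
    calc C ^ 2 * ε ^ 2 * ∑' i : ℕ, (((i + (N + 5) : ℕ) : ℝ) ^ 2)⁻¹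
        ≤ C ^ 2 * ε ^ 2 * ((N : ℝ) + 4)⁻¹ :=
          mul_le_mul_of_nonneg_left invsq (by positivity)
      _ ≤ C ^ 2 * ε ^ 2 * ε ^ ((1:ℝ)/9) :=
          mul_le_mul_of_nonneg_left hinv (by positivity)
      _ = C ^ 2 * ε ^ ((19:ℝ)/9) := by
          rw [mul_assoc, ← Real.rpow_natCast ε 2, ← Real.rpow_add hε]
          norm_num
  calc ∑ i ∈ range N, a (i + 5) ^ 2 + ∑' i : ℕ, a (i + N + 5) ^ 2
      ≤ 6 ^ 17 * C ^ 2 * ε ^ ((19:ℝ)/9) + C ^ 2 * ε ^ ((19:ℝ)/9) := add_le_add head tail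
    _ = (6 ^ 17 * C ^ 2 + C ^ 2) * ε ^ ((19:ℝ)/9) := by ring
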